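/- Let 0 ≤ φ ≤ 1/4, M = P^φ, H = P·M^{−4}, Q = P·M^{−1}, let d, e be positive integers and π a prime with π ≤ R. Then for every ε > 0 there exist positive numbers η and C such that, whenever P is sufficiently large and 1 ≤ R ≤ P^η, one has Υ_{d,e,π}(P,R;φ) ≤ C·P^ε·∫₀¹ |F_{d,e}(α)² g(α;2Q/e,R)⁸| dα. -/

import Mathlib

open Finset MeasureTheory

/-- `e(x) = e^{2πix}`. -/
noncomputable def expi (x : ℝ) : ℂ := Complex.exp (2 * Real.pi * Complex.I * x)

-- `𝒜(P,R)`: natural numbers `1 ≤ n ≤ P` all of whose prime divisors are at most `R`.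
open Classical in
noncomputable def smoothA (P R : ℝ) : Finset ℕ :=
  (Finset.Icc 1 ⌊P⌋₊).filter fun n => ∀ p : ℕ, p.Prime → p ∣ n → (p : ℝ) ≤ R

/-- The smooth Weyl sum `g(α;P,R)`. -/
noncomputable def g (α P R : ℝ) : ℂ := ∑ x ∈ smoothA P R, expi (α * (x : ℝ) ^ 4)

/-- `Δ` is an admissible exponent for `t`. -/
def IsAdmissible (t Δ : ℝ) : Prop :=
  ∃ η C : ℝ, 0 < η ∧ 0 < C ∧ ∃ P₀ : ℝ, ∀ P R : ℝ, P₀ ≤ P → 1 ≤ R → R ≤ P ^ η →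
    (∫ α in (0:ℝ)..1, ‖g α P R‖ ^ t) ≤ C * P ^ (t - 4 + Δ)


-- `ℬ(L,π,R)`: smooth numbers `n ∈ 𝒜(Lπ,R)` with `n > L`, `π ∣ n`, and all prime
-- divisors of `n` at least `π`.
open Classical in
noncomputable def calB (L : ℝ) (π : ℕ) (R : ℝ) : Finset ℕ :=
  (smoothA (L * π) R).filter fun n =>
    L < (n : ℝ) ∧ π ∣ n ∧ ∀ p : ℕ, p.Prime → p ∣ n → π ≤ p

-- The exponential sum `F̃_{d,e}(α;π)` of (3.1).
open Classical in
noncomputable def Ftilde (d e : ℕ) (P M R : ℝ) (π : ℕ) (α : ℝ) : ℂ :=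
  ∑ u ∈ calB (M / d) π R, ∑ x ∈ smoothA (P / (d * e)) R, ∑ y ∈ smoothA (P / (d * e)) R,
    if Nat.gcd x u = 1 ∧ Nat.gcd y u = 1 ∧ x ≡ y [MOD u ^ 4] ∧ y < x then
      expi (α * ((x : ℝ) ^ 4 - (y : ℝ) ^ 4) / (u : ℝ) ^ 4)
    else 0

/-- The exponential sum `F_{d,e}(α)` of (3.2). -/
noncomputable def Fde (d e : ℕ) (P M H R : ℝ) (α : ℝ) : ℂ :=
  ∑ z ∈ Finset.Icc 1 ⌊2 * P / (d * e)⌋₊, ∑ h ∈ Finset.Icc 1 ⌊H * d ^ 3 / e⌋₊,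
    ∑ u ∈ Finset.Ioc ⌊M / d⌋₊ ⌊M * R / d⌋₊,
      expi (8 * α * (h : ℝ) * (z : ℝ) * ((z : ℝ) ^ 2 + (h : ℝ) ^ 2 * (u : ℝ) ^ 8))

/-- The maximal smooth Weyl sum `f̃(α;P,M,R)` of (3.3). -/
noncomputable def ftilde (α P M R : ℝ) : ℝ :=
  ⨆ m : ℕ, if M < (m : ℝ) then ‖g α (P / m) R‖ else 0

/-- The mean value `Υ_{d,e,π}(P,R;φ)` of (3.4), with `M = P^φ`. -/
noncomputable def Upsilon (d e π : ℕ) (P M R : ℝ) : ℝ :=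
  ∫ α in (0:ℝ)..1,
    ‖Ftilde d e P M R π α‖ ^ 2 * (ftilde α (P / (d * e)) (M / d) π) ^ 8

lemma expi_add (x y : ℝ) : expi (x + y) = expi x * expi y := by
  unfold expi
  rw [← Complex.exp_add]
  congr 1
  push_cast
  ring

lemma expi_conj (x : ℝ) : (starRingEnd ℂ) (expi x) = expi (-x) := by
  unfold expi
  rw [← Complex.exp_conj]
  congr 1
  simp only [map_mul, Complex.conj_I, Complex.conj_ofReal, map_ofNat]
  push_cast
  ring

lemma expi_re (x : ℝ) : (expi x).re = Real.cos (2 * Real.pi * x) := by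
  unfold expi
  rw [Complex.exp_re]
  have h1 : (2 * (Real.pi:ℂ) * Complex.I * (x:ℝ)).re = 0 := by simp
  have h2 : (2 * (Real.pi:ℂ) * Complex.I * (x:ℝ)).im = 2 * Real.pi * x := by simp
  rw [h1, h2, Real.exp_zero, one_mul]

lemma continuous_expi : Continuous expi := by
  unfold expi
  fun_prop

noncomputable def expSum {ι : Type*} (A : Finset ι) (f : ι → ℕ) (α : ℝ) : ℂ :=
  ∑ i ∈ A, expi (α * f i)

lemma continuous_expSum {ι : Type*} (A : Finset ι) (f : ι → ℕ) :
    Continuous fun α => expSum A f α := by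
  unfold expSum
  exact continuous_finset_sum _ fun i _ => continuous_expi.comp (by fun_prop)

lemma expSum_mul {ι κ : Type*} (A : Finset ι) (B : Finset κ) (f : ι → ℕ) (g : κ → ℕ) (α : ℝ) :
    expSum A f α * expSum B g α = expSum (A ×ˢ B) (fun p => f p.1 + g p.2) α := by
  unfold expSum
  rw [Finset.sum_mul_sum, Finset.sum_product]
  refine Finset.sum_congr rfl fun i _ => Finset.sum_congr rfl fun j _ => ?_
  rw [← expi_add]
  congr 1
  push_cast
  ring

lemma integral_cos_nat (a b : ℕ) :
    (∫ α in (0:ℝ)..1, Real.cos (2 * Real.pi * ((a:ℝ) - (b:ℝ)) * α)) =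
      if a = b then (1:ℝ) else 0 := by
  by_cases h : a = b
  · simp [h]
  · rw [if_neg h]
    have hab : (a:ℝ) - (b:ℝ) ≠ 0 := by
      intro hc
      exact h (Nat.cast_injective (by linarith [sub_eq_zero.mp hc] : (a:ℝ) = b))
    have hc : 2 * Real.pi * ((a:ℝ) - (b:ℝ)) ≠ 0 := by
      have hpi := Real.pi_ne_zero
      simp only [mul_ne_zero_iff]
      exact ⟨⟨two_ne_zero, hpi⟩, hab⟩
    rw [intervalIntegral.integral_comp_mul_left Real.cos hc, integral_cos]
    have hz : Real.sin (2 * Real.pi * ((a:ℝ) - (b:ℝ)) * 1) = 0 := by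
      have h0 := Real.sin_int_mul_pi (2 * ((a:ℤ) - (b:ℤ)))
      convert h0 using 2
      push_cast
      ring
    rw [mul_one] at hz
    simp [hz]

lemma key_integral {ι : Type*} (A : Finset ι) (f : ι → ℕ) :
    (∫ α in (0:ℝ)..1, (‖expSum A f α‖)^2) =
      (((A ×ˢ A).filter fun p => f p.1 = f p.2).card : ℝ) := by
  classical
  have h1 : ∀ α : ℝ, (‖expSum A f α‖)^2 =
      ∑ p ∈ A ×ˢ A, Real.cos (2 * Real.pi * ((f p.1 : ℝ) - (f p.2 : ℝ)) * α) := by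
    intro α
    have h2 : expSum A f α * (starRingEnd ℂ) (expSum A f α)
        = ∑ p ∈ A ×ˢ A, expi (α * ((f p.1 : ℝ) - (f p.2 : ℝ))) := by
      unfold expSum
      rw [map_sum, Finset.sum_mul_sum, Finset.sum_product]
      refine Finset.sum_congr rfl fun i _ => Finset.sum_congr rfl fun j _ => ?_
      rw [expi_conj, ← expi_add]
      congr 1
      ring
    have h3 : (‖expSum A f α‖)^2
        = (expSum A f α * (starRingEnd ℂ) (expSum A f α)).re := by
      rw [Complex.mul_conj, Complex.sq_norm, Complex.ofReal_re]
    rw [h3, h2, Complex.re_sum]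
    refine Finset.sum_congr rfl fun p _ => ?_
    rw [expi_re]
    congr 1
    ring
  have hfe : (fun α => (‖expSum A f α‖)^2)
      = fun α => ∑ p ∈ A ×ˢ A, Real.cos (2 * Real.pi * ((f p.1 : ℝ) - (f p.2 : ℝ)) * α) :=
    funext h1
  rw [hfe]
  rw [intervalIntegral.integral_finset_sum]
  · have : ∀ p ∈ A ×ˢ A,
        (∫ α in (0:ℝ)..1, Real.cos (2 * Real.pi * ((f p.1 : ℝ) - (f p.2 : ℝ)) * α))
          = if f p.1 = f p.2 then (1:ℝ) else 0 := fun p _ => integral_cos_nat _ _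
    rw [Finset.sum_congr rfl this, Finset.sum_boole]
  · intro p _
    exact (Real.continuous_cos.comp (by fun_prop)).intervalIntegrable _ _

lemma card_filter_mono_of_inj {ι κ : Type*} [DecidableEq κ] (A : Finset ι) (f : ι → ℕ)
    (B : Finset κ) (g : κ → ℕ) (φ : ι → κ)
    (hmap : ∀ i ∈ A, φ i ∈ B) (hinj : Set.InjOn φ A)
    (hf : ∀ i ∈ A, g (φ i) = 16 * f i) :
    (((A ×ˢ A).filter fun p => f p.1 = f p.2).card : ℝ) ≤
      (((B ×ˢ B).filter fun p => g p.1 = g p.2).card : ℝ) := by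
  classical
  have := Finset.card_le_card_of_injOn (f := fun p : ι × ι => (φ p.1, φ p.2))
    (s := (A ×ˢ A).filter fun p => f p.1 = f p.2)
    (t := (B ×ˢ B).filter fun p => g p.1 = g p.2)
    (by
      intro p hp
      simp only [Finset.mem_coe, Finset.mem_filter, Finset.mem_product] at hp ⊢
      obtain ⟨⟨h1, h2⟩, h3⟩ := hp
      exact ⟨⟨hmap _ h1, hmap _ h2⟩, by rw [hf _ h1, hf _ h2, h3]⟩)
    (by
      intro p hp q hq hpq
      rw [Finset.coe_filter] at hp hq
      obtain ⟨hp1, _⟩ := hp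
      obtain ⟨hq1, _⟩ := hq
      rw [Finset.mem_product] at hp1 hq1
      have h1 : φ p.1 = φ q.1 := congrArg Prod.fst hpq
      have h2 : φ p.2 = φ q.2 := congrArg Prod.snd hpq
      exact Prod.ext (hinj hp1.1 hq1.1 h1) (hinj hp1.2 hq1.2 h2))
  exact_mod_cast this

/-! ### Membership helpers -/

lemma mem_smoothA_iff {P R : ℝ} {n : ℕ} :
    n ∈ smoothA P R ↔ 1 ≤ n ∧ n ≤ ⌊P⌋₊ ∧ ∀ p : ℕ, p.Prime → p ∣ n → (p : ℝ) ≤ R := by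
  unfold smoothA
  simp only [Finset.mem_filter, Finset.mem_Icc]
  tauto

lemma mem_calB_iff {L : ℝ} {π : ℕ} {R : ℝ} {u : ℕ} :
    u ∈ calB L π R ↔ u ∈ smoothA (L * π) R ∧ L < (u : ℝ) ∧ π ∣ u ∧
      ∀ p : ℕ, p.Prime → p ∣ u → π ≤ p := by
  unfold calB
  simp only [Finset.mem_filter]

/-! ### Representations as canonical exponential sums -/

def psiS (s : ℕ × ℕ × ℕ) : ℕ := (s.2.1 ^ 4 - s.2.2 ^ 4) / s.1 ^ 4

def psiT (t : ℕ × ℕ × ℕ) : ℕ := 8 * t.2.1 * t.1 * (t.1 ^ 2 + t.2.1 ^ 2 * t.2.2 ^ 8)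

open Classical in
noncomputable def SSetF (d e : ℕ) (P M R : ℝ) (π : ℕ) : Finset (ℕ × ℕ × ℕ) :=
  (calB (M / d) π R ×ˢ (smoothA (P / (d * e)) R ×ˢ smoothA (P / (d * e)) R)).filter
    fun s => Nat.gcd s.2.1 s.1 = 1 ∧ Nat.gcd s.2.2 s.1 = 1 ∧
      s.2.1 ≡ s.2.2 [MOD s.1 ^ 4] ∧ s.2.2 < s.2.1

noncomputable def TSet (d e : ℕ) (P M H R : ℝ) : Finset (ℕ × ℕ × ℕ) :=
  Finset.Icc 1 ⌊2 * P / (d * e)⌋₊ ×ˢ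
    (Finset.Icc 1 ⌊H * d ^ 3 / e⌋₊ ×ˢ Finset.Ioc ⌊M / d⌋₊ ⌊M * R / d⌋₊)

lemma g_eq (α X R : ℝ) : g α X R = expSum (smoothA X R) (fun n => n ^ 4) α := by
  unfold g expSum
  refine Finset.sum_congr rfl fun x _ => ?_
  congr 1
  push_cast
  ring

lemma Fde_eq (d e : ℕ) (P M H R : ℝ) (α : ℝ) :
    Fde d e P M H R α = expSum (TSet d e P M H R) psiT α := by
  unfold Fde expSum TSet
  rw [Finset.sum_product]
  refine Finset.sum_congr rfl fun z _ => ?_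
  rw [Finset.sum_product]
  refine Finset.sum_congr rfl fun h _ => Finset.sum_congr rfl fun u _ => ?_
  congr 1
  unfold psiT
  push_cast
  ring

lemma Ftilde_eq (d e : ℕ) (P M R : ℝ) (π : ℕ) (α : ℝ) :
    Ftilde d e P M R π α = expSum (SSetF d e P M R π) psiS α := by
  classical
  unfold Ftilde expSum SSetF
  rw [Finset.sum_filter, Finset.sum_product]
  refine Finset.sum_congr rfl fun u hu => ?_
  rw [Finset.sum_product]
  refine Finset.sum_congr rfl fun x hx => Finset.sum_congr rfl fun y hy => ?_
  by_cases hc : Nat.gcd x u = 1 ∧ Nat.gcd y u = 1 ∧ x ≡ y [MOD u ^ 4] ∧ y < x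
  · rw [if_pos hc, if_pos hc]
    obtain ⟨-, -, hmod, hyx⟩ := hc
    have hu1 : 1 ≤ u := (mem_smoothA_iff.mp (mem_calB_iff.mp hu).1).1
    have hdvd1 : u ^ 4 ∣ x - y := (Nat.modEq_iff_dvd' hyx.le).mp hmod.symm
    have hdvd : u ^ 4 ∣ x ^ 4 - y ^ 4 := hdvd1.trans (Nat.sub_dvd_pow_sub_pow x y 4)
    have hune : ((u : ℝ)) ^ 4 ≠ 0 := by positivity
    have hcast : (psiS (u, x, y) : ℝ) = ((x : ℝ) ^ 4 - (y : ℝ) ^ 4) / (u : ℝ) ^ 4 := by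
      unfold psiS
      dsimp only
      rw [Nat.cast_div hdvd (by exact_mod_cast hune)]
      rw [Nat.cast_sub (Nat.pow_le_pow_left hyx.le 4)]
      push_cast
      ring
    congr 1
    rw [hcast]
    ring
  · rw [if_neg hc, if_neg hc]

def phi4 (f : ℕ → ℕ) : ℕ × ℕ × ℕ × ℕ → ℕ :=
  fun q => f q.1 + (f q.2.1 + (f q.2.2.1 + f q.2.2.2))

lemma expSum_pow_four {κ : Type*} (B : Finset κ) (f : κ → ℕ) (α : ℝ) :
    (expSum B f α) ^ 4 = expSum (B ×ˢ B ×ˢ B ×ˢ B)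
      (fun q => f q.1 + (f q.2.1 + (f q.2.2.1 + f q.2.2.2))) α := by
  rw [show (expSum B f α) ^ 4
      = expSum B f α * (expSum B f α * (expSum B f α * expSum B f α)) by ring]
  rw [expSum_mul, expSum_mul, expSum_mul]

/-! ### Counting π-smooth numbers: at most polylog many -/

lemma smoothA_card_le (π : ℕ) (hπ : π.Prime) (X P : ℝ) (hXP : X ≤ P) (hP : 1 ≤ P) :
    (smoothA X (π : ℝ)).card ≤ (Nat.log 2 ⌊P⌋₊ + 1) ^ (π + 1) := by
  classical
  set K := Nat.log 2 ⌊P⌋₊ with hK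
  have hfl : 1 ≤ ⌊P⌋₊ := Nat.le_floor (by exact_mod_cast hP)
  -- every exponent in the factorization of an element is ≤ K
  have hexp : ∀ n ∈ smoothA X (π : ℝ), ∀ p : ℕ, n.factorization p ≤ K := by
    intro n hn p
    rcases mem_smoothA_iff.mp hn with ⟨hn1, hnX, -⟩
    by_cases hp : p.Prime
    · by_cases hpd : p ∣ n
      · have h1 : p ^ n.factorization p ∣ n := Nat.ordProj_dvd n p
        have h2 : 2 ^ n.factorization p ≤ p ^ n.factorization p :=
          Nat.pow_le_pow_left hp.two_le _
        have h3 : p ^ n.factorization p ≤ n := Nat.le_of_dvd (by omega) h1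
        have h4 : n ≤ ⌊P⌋₊ := hnX.trans (Nat.floor_le_floor hXP)
        have h5 : 2 ^ n.factorization p ≤ ⌊P⌋₊ := by omega
        exact (Nat.le_log_iff_pow_le one_lt_two (by omega)).mpr h5
      · simp [Nat.factorization_eq_zero_of_not_dvd hpd]
    · simp [Nat.factorization_eq_zero_of_not_prime _ hp]
  have hinj : Set.InjOn
      (fun (n : ℕ) => fun p : Fin (π + 1) => (⟨min (n.factorization p) K, by omega⟩ : Fin (K + 1)))
      (smoothA X (π : ℝ)) := by
    intro n hn m hm hnm
    rcases mem_smoothA_iff.mp hn with ⟨hn1, -, hns⟩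
    rcases mem_smoothA_iff.mp hm with ⟨hm1, -, hms⟩
    have hfact : n.factorization = m.factorization := by
      ext p
      by_cases hp : p.Prime
      · by_cases hple : p ≤ π
        · have := congrFun hnm ⟨p, by omega⟩
          have h1 : min (n.factorization p) K = min (m.factorization p) K := by
            simpa using congrArg Fin.val this
          have h2 := hexp n hn p
          have h3 := hexp m hm p
          rw [min_eq_left h2, min_eq_left h3] at h1
          exact h1
        · have hnd : ¬ p ∣ n := fun hd => hple (by exact_mod_cast hns p hp hd)
          have hmd : ¬ p ∣ m := fun hd => hple (by exact_mod_cast hms p hp hd)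
          rw [Nat.factorization_eq_zero_of_not_dvd hnd,
            Nat.factorization_eq_zero_of_not_dvd hmd]
      · rw [Nat.factorization_eq_zero_of_not_prime _ hp,
          Nat.factorization_eq_zero_of_not_prime _ hp]
    exact Nat.factorization_inj (by simp; omega) (by simp; omega) hfact
  calc (smoothA X (π : ℝ)).card
      ≤ (Finset.univ : Finset (Fin (π + 1) → Fin (K + 1))).card :=
        Finset.card_le_card_of_injOn _ (fun n _ => Finset.mem_univ _) hinj
    _ = (K + 1) ^ (π + 1) := by
        rw [Finset.card_univ, Fintype.card_fun]
        simp

/-! ### Pointwise bound for `ftilde ^ 8` -/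

lemma ftilde_nonneg (α P M R : ℝ) : 0 ≤ ftilde α P M R := by
  refine Real.iSup_nonneg fun m => ?_
  split_ifs
  · exact norm_nonneg _
  · exact le_refl 0

lemma ftilde_pow_le (P' M' : ℝ) (π : ℕ) (α : ℝ) (hM' : 0 < M') (hP' : 0 ≤ P') :
    ftilde α P' M' (π : ℝ) ^ 8 ≤
      ∑ w ∈ smoothA (P' / M') (π : ℝ), ‖g α (w : ℝ) (π : ℝ)‖ ^ 8 := by
  classical
  set T : ℝ := ∑ w ∈ smoothA (P' / M') (π : ℝ), ‖g α (w : ℝ) (π : ℝ)‖ ^ 8 with hT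
  have hT0 : 0 ≤ T := Finset.sum_nonneg fun w _ => by positivity
  have hsup : ftilde α P' M' (π : ℝ) ≤ T ^ ((8 : ℝ)⁻¹) := by
    refine ciSup_le fun m => ?_
    split_ifs with hm
    · by_cases hA : smoothA (P' / (m : ℝ)) (π : ℝ) = ∅
      · have : g α (P' / (m : ℝ)) (π : ℝ) = 0 := by
          unfold g
          rw [hA, Finset.sum_empty]
        rw [this]
        simpa using Real.rpow_nonneg hT0 _
      · have hne : (smoothA (P' / (m : ℝ)) (π : ℝ)).Nonempty := Finset.nonempty_iff_ne_empty.mpr hA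
        set w := (smoothA (P' / (m : ℝ)) (π : ℝ)).max' hne with hw
        have hwmem : w ∈ smoothA (P' / (m : ℝ)) (π : ℝ) := Finset.max'_mem _ _
        rcases mem_smoothA_iff.mp hwmem with ⟨hw1, hw2, hw3⟩
        have hm0 : (0 : ℝ) < (m : ℝ) := lt_trans hM' hm
        have hwR : (w : ℝ) ≤ P' / (m : ℝ) :=
          le_trans (Nat.cast_le.mpr hw2) (Nat.floor_le (by positivity))
        have hwW : w ∈ smoothA (P' / M') (π : ℝ) := by
          refine mem_smoothA_iff.mpr ⟨hw1, Nat.le_floor ?_, hw3⟩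
          exact hwR.trans (div_le_div_of_nonneg_left hP' hM' hm.le)
        have hset : smoothA (P' / (m : ℝ)) (π : ℝ) = smoothA ((w : ℕ) : ℝ) (π : ℝ) := by
          ext n
          rw [mem_smoothA_iff, mem_smoothA_iff]
          constructor
          · rintro ⟨h1, h2, h3⟩
            refine ⟨h1, ?_, h3⟩
            have : n ≤ w := Finset.le_max' _ n (mem_smoothA_iff.mpr ⟨h1, h2, h3⟩)
            simpa [Nat.floor_natCast] using this
          · rintro ⟨h1, h2, h3⟩
            refine ⟨h1, ?_, h3⟩
            rw [Nat.floor_natCast] at h2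
            exact h2.trans hw2
        have hgrw : g α (P' / (m : ℝ)) (π : ℝ) = g α ((w : ℕ) : ℝ) (π : ℝ) := by
          unfold g
          rw [hset]
        rw [hgrw]
        have hterm : ‖g α ((w : ℕ) : ℝ) (π : ℝ)‖ ^ 8 ≤ T :=
          Finset.single_le_sum (f := fun w => ‖g α ((w : ℕ) : ℝ) (π : ℝ)‖ ^ 8)
            (fun i _ => by positivity) hwW
        have habs : (0 : ℝ) ≤ ‖g α ((w : ℕ) : ℝ) (π : ℝ)‖ :=
          norm_nonneg _
        calc ‖g α ((w : ℕ) : ℝ) (π : ℝ)‖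
            = (‖g α ((w : ℕ) : ℝ) (π : ℝ)‖ ^ (8 : ℕ)) ^ ((8 : ℝ)⁻¹) := by
              rw [← Real.rpow_natCast _ 8, ← Real.rpow_mul habs]
              norm_num
          _ ≤ T ^ ((8 : ℝ)⁻¹) := Real.rpow_le_rpow (by positivity) hterm (by norm_num)
    · exact Real.rpow_nonneg hT0 _
  calc ftilde α P' M' (π : ℝ) ^ 8 ≤ (T ^ ((8 : ℝ)⁻¹)) ^ (8 : ℕ) :=
        pow_le_pow_left₀ (ftilde_nonneg _ _ _ _) hsup 8
    _ = T := by
        rw [← Real.rpow_natCast (T ^ ((8 : ℝ)⁻¹)) 8, ← Real.rpow_mul hT0]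
        norm_num

/-! ### The injection `(u,x,y) ↦ (x+y, (x-y)/u⁴, u)` -/

lemma sub_pow_four_eq (x y : ℕ) (hyx : y ≤ x) :
    x ^ 4 - y ^ 4 = (x - y) * (x + y) * (x ^ 2 + y ^ 2) := by
  obtain ⟨t, rfl⟩ : ∃ t, x = y + t := ⟨x - y, by omega⟩
  have h1 : (y + t) ^ 4 = y ^ 4 + t * ((y + t) + y) * ((y + t) ^ 2 + y ^ 2) := by ring
  rw [h1, Nat.add_sub_cancel_left, Nat.add_sub_cancel_left]

lemma PhiS_mem_phase (d e π : ℕ) (P M H R : ℝ) (hd : 0 < d) (he : 0 < e)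
    (hP1 : 1 ≤ P) (hM1 : 1 ≤ M) (hπR : (π : ℝ) ≤ R) (hH4 : H = P / M ^ 4) :
    ∀ s ∈ SSetF d e P M R π,
      (s.2.1 + s.2.2, ((s.2.1 - s.2.2) / s.1 ^ 4, s.1)) ∈ TSet d e P M H R ∧
      psiT (s.2.1 + s.2.2, ((s.2.1 - s.2.2) / s.1 ^ 4, s.1)) = 16 * psiS s := by
  rintro ⟨u, x, y⟩ hs
  rw [SSetF, Finset.mem_filter, Finset.mem_product, Finset.mem_product] at hs
  dsimp only at hs ⊢
  obtain ⟨⟨hu, hx, hy⟩, -, -, hmod, hyx⟩ := hs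
  have hd0 : (0 : ℝ) < (d : ℝ) := by exact_mod_cast hd
  have he0 : (0 : ℝ) < (e : ℝ) := by exact_mod_cast he
  have hP0 : (0 : ℝ) < P := lt_of_lt_of_le one_pos hP1
  have hM0 : (0 : ℝ) < M := lt_of_lt_of_le one_pos hM1
  rcases mem_calB_iff.mp hu with ⟨huA, huM, -, -⟩
  rcases mem_smoothA_iff.mp huA with ⟨hu1, huMR, -⟩
  rcases mem_smoothA_iff.mp hx with ⟨hx1, hxP, -⟩
  rcases mem_smoothA_iff.mp hy with ⟨hy1, hyP, -⟩
  have hPde0 : (0 : ℝ) ≤ P / ((d : ℝ) * (e : ℝ)) := by positivity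
  have hxPr : (x : ℝ) ≤ P / ((d : ℝ) * (e : ℝ)) :=
    le_trans (Nat.cast_le.mpr hxP) (Nat.floor_le hPde0)
  have hyPr : (y : ℝ) ≤ P / ((d : ℝ) * (e : ℝ)) :=
    le_trans (Nat.cast_le.mpr hyP) (Nat.floor_le hPde0)
  have hdvd : u ^ 4 ∣ x - y := (Nat.modEq_iff_dvd' hyx.le).mp hmod.symm
  set k := (x - y) / u ^ 4 with hkdef
  have htk : k * u ^ 4 = x - y := Nat.div_mul_cancel hdvd
  have hk1 : 1 ≤ k := by
    rcases Nat.eq_zero_or_pos k with h0 | h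
    · rw [h0] at htk
      omega
    · exact h
  have hMd0 : (0 : ℝ) < M / (d : ℝ) := by positivity
  constructor
  · rw [TSet, Finset.mem_product, Finset.mem_product]
    simp only [Finset.mem_Icc, Finset.mem_Ioc]
    refine ⟨⟨by omega, ?_⟩, ⟨hk1, ?_⟩, ?_, ?_⟩
    · -- z = x + y ≤ ⌊2P/(de)⌋
      refine Nat.le_floor ?_
      push_cast
      rw [show 2 * P / ((d : ℝ) * (e : ℝ)) = 2 * (P / ((d : ℝ) * (e : ℝ))) by ring]
      linarith
    · -- h = k ≤ ⌊Hd³/e⌋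
      refine Nat.le_floor ?_
      have hkr : (k : ℝ) * (u : ℝ) ^ 4 ≤ P / ((d : ℝ) * (e : ℝ)) := by
        have h1 : ((k * u ^ 4 : ℕ) : ℝ) ≤ (x : ℝ) := by
          rw [htk]
          exact_mod_cast Nat.cast_le.mpr (Nat.sub_le x y)
        push_cast at h1
        linarith
      have hu4 : (M / (d : ℝ)) ^ 4 < (u : ℝ) ^ 4 :=
        pow_lt_pow_left₀ huM hMd0.le (by norm_num)
      have h2 : (k : ℝ) ≤ P / ((d : ℝ) * (e : ℝ)) / (u : ℝ) ^ 4 := by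
        rw [le_div_iff₀ (by positivity)]
        exact hkr
      have h3 : P / ((d : ℝ) * (e : ℝ)) / (u : ℝ) ^ 4
          ≤ P / ((d : ℝ) * (e : ℝ)) / (M / (d : ℝ)) ^ 4 :=
        div_le_div_of_nonneg_left hPde0 (by positivity) hu4.le
      have heq : P / ((d : ℝ) * (e : ℝ)) / (M / (d : ℝ)) ^ 4 = H * (d : ℝ) ^ 3 / (e : ℝ) := by
        rw [hH4]
        field_simp
      linarith
    · -- ⌊M/d⌋ < u
      exact (Nat.floor_lt hMd0.le).mpr huM
    · -- u ≤ ⌊MR/d⌋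
      refine Nat.le_floor ?_
      have h1 : (u : ℝ) ≤ M / (d : ℝ) * (π : ℝ) :=
        le_trans (Nat.cast_le.mpr huMR) (Nat.floor_le (by positivity))
      have h2 : M / (d : ℝ) * (π : ℝ) ≤ M / (d : ℝ) * R :=
        mul_le_mul_of_nonneg_left hπR (by positivity)
      have h3 : M / (d : ℝ) * R = M * R / (d : ℝ) := by ring
      linarith
  · -- phase identity
    have hsub : x ^ 4 - y ^ 4 = (x - y) * (x + y) * (x ^ 2 + y ^ 2) :=
      sub_pow_four_eq x y hyx.le
    have hu40 : 0 < u ^ 4 := by positivity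
    have hpsiS : psiS (u, x, y) = k * ((x + y) * (x ^ 2 + y ^ 2)) := by
      unfold psiS
      dsimp only
      rw [hsub, ← htk]
      rw [show k * u ^ 4 * (x + y) * (x ^ 2 + y ^ 2)
          = k * ((x + y) * (x ^ 2 + y ^ 2)) * u ^ 4 by ring]
      exact Nat.mul_div_cancel _ hu40
    have hk2 : k ^ 2 * u ^ 8 = (x - y) ^ 2 := by
      rw [← htk]
      ring
    unfold psiT
    dsimp only
    rw [hpsiS, hk2]
    obtain ⟨t, rfl⟩ : ∃ t, x = y + t := ⟨x - y, by omega⟩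
    rw [Nat.add_sub_cancel_left]
    ring

lemma PhiS_inj (d e π : ℕ) (P M R : ℝ) :
    Set.InjOn (fun s : ℕ × ℕ × ℕ => (s.2.1 + s.2.2, ((s.2.1 - s.2.2) / s.1 ^ 4, s.1)))
      (SSetF d e P M R π) := by
  rintro ⟨u, x, y⟩ hs ⟨u', x', y'⟩ hs' heq
  rw [Finset.mem_coe, SSetF, Finset.mem_filter] at hs hs'
  dsimp only at hs hs' heq
  obtain ⟨-, -, -, hmod, hyx⟩ := hs
  obtain ⟨-, -, -, hmod', hyx'⟩ := hs'
  have hdvd : u ^ 4 ∣ x - y := (Nat.modEq_iff_dvd' hyx.le).mp hmod.symm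
  have hdvd' : u' ^ 4 ∣ x' - y' := (Nat.modEq_iff_dvd' hyx'.le).mp hmod'.symm
  simp only [Prod.mk.injEq] at heq
  obtain ⟨h1, h2, h3⟩ := heq
  subst h3
  have h4 : x - y = x' - y' := by
    rw [← Nat.div_mul_cancel hdvd, ← Nat.div_mul_cancel hdvd', h2]
  simp only [Prod.mk.injEq]
  exact ⟨trivial, by omega, by omega⟩

lemma mem_smoothA_double {π : ℕ} (hπ : π.Prime) {R X Y : ℝ} (hπR : (π : ℝ) ≤ R)
    (hXY : 2 * X ≤ Y) (hX0 : 0 ≤ X) {a : ℕ} (ha : a ∈ smoothA X (π : ℝ)) :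
    2 * a ∈ smoothA Y R := by
  rcases mem_smoothA_iff.mp ha with ⟨ha1, haX, has⟩
  refine mem_smoothA_iff.mpr ⟨by omega, Nat.le_floor ?_, ?_⟩
  · have h1 : (a : ℝ) ≤ X := le_trans (Nat.cast_le.mpr haX) (Nat.floor_le hX0)
    push_cast
    linarith
  · intro p hp hpd
    have h2 : (2 : ℝ) ≤ (π : ℝ) := by exact_mod_cast hπ.two_le
    rcases (Nat.Prime.dvd_mul hp).mp hpd with h | h
    · have : p ≤ 2 := Nat.le_of_dvd two_pos h
      have : (p : ℝ) ≤ 2 := by exact_mod_cast this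
      linarith
    · exact le_trans (has p hp h) hπR

/-! ### Combined phase functions and the single-`w` comparison -/

def FL : (ℕ × ℕ × ℕ) × ℕ × ℕ × ℕ × ℕ → ℕ :=
  fun p => psiS p.1 + (p.2.1 ^ 4 + (p.2.2.1 ^ 4 + (p.2.2.2.1 ^ 4 + p.2.2.2.2 ^ 4)))

def FR : (ℕ × ℕ × ℕ) × ℕ × ℕ × ℕ × ℕ → ℕ :=
  fun p => psiT p.1 + (p.2.1 ^ 4 + (p.2.2.1 ^ 4 + (p.2.2.2.1 ^ 4 + p.2.2.2.2 ^ 4)))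

def PhiMap : (ℕ × ℕ × ℕ) × ℕ × ℕ × ℕ × ℕ → (ℕ × ℕ × ℕ) × ℕ × ℕ × ℕ × ℕ :=
  fun p => ((p.1.2.1 + p.1.2.2, ((p.1.2.1 - p.1.2.2) / p.1.1 ^ 4, p.1.1)),
    (2 * p.2.1, (2 * p.2.2.1, (2 * p.2.2.2.1, 2 * p.2.2.2.2))))

lemma step_w (d e π : ℕ) (P M H Q R : ℝ) (hd : 0 < d) (he : 0 < e) (hπ : π.Prime)
    (hP1 : 1 ≤ P) (hM1 : 1 ≤ M) (hπR : (π : ℝ) ≤ R) (hH4 : H = P / M ^ 4)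
    (hQM : Q = P / M) (w : ℕ)
    (hw : w ∈ smoothA (P / ((d : ℝ) * (e : ℝ)) / (M / (d : ℝ))) (π : ℝ)) :
    (∫ α in (0:ℝ)..1,
        ‖Ftilde d e P M R π α‖ ^ 2 * ‖g α (w : ℝ) (π : ℝ)‖ ^ 8)
      ≤ ∫ α in (0:ℝ)..1,
          ‖(Fde d e P M H R α) ^ 2 * (g α (2 * Q / (e : ℝ)) R) ^ 8‖ := by
  classical
  have hd0 : (0 : ℝ) < (d : ℝ) := by exact_mod_cast hd
  have he0 : (0 : ℝ) < (e : ℝ) := by exact_mod_cast he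
  have hP0 : (0 : ℝ) < P := lt_of_lt_of_le one_pos hP1
  have hM0 : (0 : ℝ) < M := lt_of_lt_of_le one_pos hM1
  have hwQ : (w : ℝ) ≤ Q / (e : ℝ) := by
    rcases mem_smoothA_iff.mp hw with ⟨-, hw2, -⟩
    have h1 : (w : ℝ) ≤ P / ((d : ℝ) * (e : ℝ)) / (M / (d : ℝ)) :=
      le_trans (Nat.cast_le.mpr hw2) (Nat.floor_le (by positivity))
    have h2 : P / ((d : ℝ) * (e : ℝ)) / (M / (d : ℝ)) = Q / (e : ℝ) := by
      rw [hQM]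
      field_simp
    linarith
  set Aw : Finset ℕ := smoothA ((w : ℕ) : ℝ) (π : ℝ) with hAw
  set AQ : Finset ℕ := smoothA (2 * Q / (e : ℝ)) R with hAQ
  set CC : Finset ((ℕ × ℕ × ℕ) × ℕ × ℕ × ℕ × ℕ) :=
    SSetF d e P M R π ×ˢ (Aw ×ˢ Aw ×ˢ Aw ×ˢ Aw) with hCC
  set DD : Finset ((ℕ × ℕ × ℕ) × ℕ × ℕ × ℕ × ℕ) :=
    TSet d e P M H R ×ˢ (AQ ×ˢ AQ ×ˢ AQ ×ˢ AQ) with hDD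
  have hLfun : (fun α : ℝ => ‖Ftilde d e P M R π α‖ ^ 2 *
      ‖g α (w : ℝ) (π : ℝ)‖ ^ 8)
      = fun α => ‖expSum CC FL α‖ ^ 2 := by
    funext α
    rw [show ‖Ftilde d e P M R π α‖ ^ 2 * ‖g α (w : ℝ) (π : ℝ)‖ ^ 8
        = ‖Ftilde d e P M R π α * (g α (w : ℝ) (π : ℝ)) ^ 4‖ ^ 2 by
          rw [norm_mul, norm_pow]; ring]
    rw [Ftilde_eq, g_eq, expSum_pow_four, expSum_mul]
    rfl
  have hRfun : (fun α : ℝ => ‖(Fde d e P M H R α) ^ 2 *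
      (g α (2 * Q / (e : ℝ)) R) ^ 8‖)
      = fun α => ‖expSum DD FR α‖ ^ 2 := by
    funext α
    rw [show (Fde d e P M H R α) ^ 2 * (g α (2 * Q / (e : ℝ)) R) ^ 8
        = (Fde d e P M H R α * (g α (2 * Q / (e : ℝ)) R) ^ 4) ^ 2 by ring, norm_pow]
    rw [Fde_eq, g_eq, expSum_pow_four, expSum_mul]
    rfl
  have h2w : 2 * ((w : ℕ) : ℝ) ≤ 2 * Q / (e : ℝ) := by
    rw [show 2 * Q / (e : ℝ) = 2 * (Q / (e : ℝ)) by ring]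
    linarith
  rw [hLfun, hRfun, key_integral CC FL, key_integral DD FR]
  refine card_filter_mono_of_inj CC FL DD FR PhiMap ?_ ?_ ?_
  · -- maps into DD
    intro i hi
    simp only [hCC, Finset.mem_product] at hi
    obtain ⟨hs, ha, hb, hc, hdd⟩ := hi
    have hTmem := (PhiS_mem_phase d e π P M H R hd he hP1 hM1 hπR hH4 i.1 hs).1
    simp only [hDD, PhiMap, Finset.mem_product]
    refine ⟨hTmem, ?_, ?_, ?_, ?_⟩ <;>
      [exact mem_smoothA_double hπ hπR h2w (Nat.cast_nonneg w) ha;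
       exact mem_smoothA_double hπ hπR h2w (Nat.cast_nonneg w) hb;
       exact mem_smoothA_double hπ hπR h2w (Nat.cast_nonneg w) hc;
       exact mem_smoothA_double hπ hπR h2w (Nat.cast_nonneg w) hdd]
  · -- injectivity
    intro p hp q hq h
    simp only [Finset.mem_coe, hCC, Finset.mem_product] at hp hq
    have h1 : (PhiMap p).1 = (PhiMap q).1 := congrArg Prod.fst h
    have h2 : (PhiMap p).2 = (PhiMap q).2 := congrArg Prod.snd h
    have hfst : p.1 = q.1 := PhiS_inj d e π P M R hp.1 hq.1 h1
    have hsnd : p.2 = q.2 := by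
      simp only [PhiMap, Prod.mk.injEq] at h2
      obtain ⟨e1, e2, e3, e4⟩ := h2
      exact Prod.ext (by omega) (Prod.ext (by omega) (Prod.ext (by omega) (by omega)))
    exact Prod.ext hfst hsnd
  · -- phase identity
    intro i hi
    simp only [hCC, Finset.mem_product] at hi
    have hT := (PhiS_mem_phase d e π P M H R hd he hP1 hM1 hπR hH4 i.1 hi.1).2
    simp only [FR, FL, PhiMap]
    rw [hT]
    ring

theorem Upsilon_bound_by_Fde :
    ∀ φ : ℝ, 0 ≤ φ → φ ≤ 1 / 4 → ∀ d e : ℕ, 0 < d → 0 < e → ∀ π : ℕ, π.Prime →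
      ∀ ε : ℝ, 0 < ε →
        ∃ η C : ℝ, 0 < η ∧ 0 < C ∧ ∃ P₀ : ℝ, ∀ P R M H Q : ℝ,
          P₀ ≤ P → 1 ≤ R → R ≤ P ^ η → (π : ℝ) ≤ R →
          M = P ^ φ → H = P * M ^ (-4 : ℝ) → Q = P * M ^ (-1 : ℝ) →
          Upsilon d e π P M R ≤
            C * P ^ ε *
              ∫ α in (0:ℝ)..1, ‖(Fde d e P M H R α) ^ 2 * (g α (2 * Q / e) R) ^ 8‖ := by
  intro φ hφ0 hφ14 d e hd he π hπ ε hε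
  classical
  have hπ1 : (0:ℝ) < (π : ℝ) + 1 := by positivity
  have hδ : (0:ℝ) < ε / ((π : ℝ) + 1) := by positivity
  set δ : ℝ := ε / ((π : ℝ) + 1) with hδdef
  have hlog2pos : (0:ℝ) < Real.log 2 := Real.log_pos one_lt_two
  have hlo := isLittleO_log_rpow_atTop hδ
  have hbound := (Asymptotics.isLittleO_iff.mp hlo) (c := Real.log 2 / 2) (by positivity)
  obtain ⟨P₀, hP₀⟩ := Filter.eventually_atTop.mp ((Filter.eventually_ge_atTop (2:ℝ)).and hbound)
  refine ⟨1, 1, one_pos, one_pos, P₀, ?_⟩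
  intro P R M H Q hPP₀ hR1 hRP hπR hM hH hQ
  obtain ⟨hP2, hlognorm⟩ := hP₀ P hPP₀
  have hP1 : (1:ℝ) ≤ P := by linarith
  have hP0 : (0:ℝ) < P := by linarith
  have hd0 : (0 : ℝ) < (d : ℝ) := by exact_mod_cast hd
  have he0 : (0 : ℝ) < (e : ℝ) := by exact_mod_cast he
  have hM1 : (1:ℝ) ≤ M := by
    rw [hM]
    calc (1:ℝ) = P ^ (0:ℝ) := (Real.rpow_zero P).symm
      _ ≤ P ^ φ := Real.rpow_le_rpow_of_exponent_le hP1 hφ0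
  have hM0 : (0:ℝ) < M := lt_of_lt_of_le one_pos hM1
  have hH4 : H = P / M ^ 4 := by
    rw [hH, show ((-4:ℝ)) = -((4:ℕ):ℝ) by norm_num, Real.rpow_neg hM0.le,
      Real.rpow_natCast, div_eq_mul_inv]
  have hQM : Q = P / M := by
    rw [hQ, show ((-1:ℝ)) = -((1:ℕ):ℝ) by norm_num, Real.rpow_neg hM0.le,
      Real.rpow_natCast, pow_one, div_eq_mul_inv]
  -- the card bound
  set K := Nat.log 2 ⌊P⌋₊ with hKdef
  have hfl1 : 1 ≤ ⌊P⌋₊ := Nat.le_floor (by exact_mod_cast hP1)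
  have h2K : (2:ℝ) ^ K ≤ P := by
    have h0 : 2 ^ K ≤ ⌊P⌋₊ := Nat.pow_log_le_self 2 (x := ⌊P⌋₊) (by omega)
    calc (2:ℝ) ^ K = ((2 ^ K : ℕ) : ℝ) := by push_cast; ring
      _ ≤ (⌊P⌋₊ : ℝ) := by exact_mod_cast h0
      _ ≤ P := Nat.floor_le hP0.le
  have hKle : (K:ℝ) * Real.log 2 ≤ Real.log P := by
    calc (K:ℝ) * Real.log 2 = Real.log ((2:ℝ) ^ K) := by rw [Real.log_pow]
      _ ≤ Real.log P := Real.log_le_log (by positivity) h2K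
  have hlogP2 : Real.log 2 ≤ Real.log P := Real.log_le_log (by norm_num) hP2
  have hlogle : Real.log P ≤ Real.log 2 / 2 * P ^ δ := by
    have h1 : ‖Real.log P‖ = Real.log P := by
      rw [Real.norm_eq_abs, abs_of_nonneg (Real.log_nonneg hP1)]
    have h2 : ‖P ^ δ‖ = P ^ δ := by
      rw [Real.norm_eq_abs, abs_of_nonneg (Real.rpow_nonneg hP0.le δ)]
    rw [h1, h2] at hlognorm
    exact hlognorm
  have hK1 : (K:ℝ) + 1 ≤ P ^ δ := by
    have h1 : (K:ℝ) ≤ Real.log P / Real.log 2 := by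
      rw [le_div_iff₀ hlog2pos]
      exact hKle
    have h2 : (1:ℝ) ≤ Real.log P / Real.log 2 := by
      rw [le_div_iff₀ hlog2pos]
      linarith
    calc (K:ℝ) + 1 ≤ 2 * (Real.log P / Real.log 2) := by linarith
      _ = 2 / Real.log 2 * Real.log P := by ring
      _ ≤ 2 / Real.log 2 * (Real.log 2 / 2 * P ^ δ) :=
          mul_le_mul_of_nonneg_left hlogle (by positivity)
      _ = P ^ δ := by
          field_simp
  have hcard : (((K + 1 : ℕ)) : ℝ) ^ (π + 1) ≤ P ^ ε := by
    calc (((K + 1 : ℕ)) : ℝ) ^ (π + 1) ≤ (P ^ δ) ^ (π + 1) := by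
          refine pow_le_pow_left₀ (by positivity) ?_ _
          push_cast
          exact hK1
      _ = P ^ ε := by
          rw [← Real.rpow_natCast (P ^ δ) (π + 1), ← Real.rpow_mul hP0.le]
          congr 1
          rw [hδdef]
          push_cast
          field_simp
  -- the set of w's
  set W : Finset ℕ := smoothA (P / ((d : ℝ) * (e : ℝ)) / (M / (d : ℝ))) (π : ℝ) with hW
  have hcardW : (W.card : ℝ) ≤ P ^ ε := by
    have hXeq : P / ((d : ℝ) * (e : ℝ)) / (M / (d : ℝ)) = P / ((e : ℝ) * M) := by
      field_simp
    have hXP : P / ((d : ℝ) * (e : ℝ)) / (M / (d : ℝ)) ≤ P := by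
      rw [hXeq]
      have he1 : (1:ℝ) ≤ (e : ℝ) := by exact_mod_cast he
      have : (1:ℝ) ≤ (e : ℝ) * M := by nlinarith
      exact div_le_self hP0.le this
    have h1 := smoothA_card_le π hπ _ P hXP hP1
    calc (W.card : ℝ) ≤ (((K + 1) ^ (π + 1) : ℕ) : ℝ) := Nat.cast_le.mpr h1
      _ = (((K + 1 : ℕ)) : ℝ) ^ (π + 1) := by push_cast; ring
      _ ≤ P ^ ε := hcard
  -- abbreviations
  set I2 : ℝ := ∫ α in (0:ℝ)..1,
      ‖(Fde d e P M H R α) ^ 2 * (g α (2 * Q / (e : ℝ)) R) ^ 8‖ with hI2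
  have hI2nn : 0 ≤ I2 :=
    intervalIntegral.integral_nonneg (by norm_num) (fun u _ => by positivity)
  unfold Upsilon
  by_cases hint : IntervalIntegrable
      (fun α => ‖Ftilde d e P M R π α‖ ^ 2 *
        ftilde α (P / ((d : ℝ) * (e : ℝ))) (M / (d : ℝ)) (π : ℝ) ^ 8)
      MeasureTheory.volume 0 1
  · -- main case
    have hFcont : Continuous fun α => Ftilde d e P M R π α := by
      have hfe : (fun α => Ftilde d e P M R π α)
          = fun α => expSum (SSetF d e P M R π) psiS α := funext (Ftilde_eq d e P M R π)
      rw [hfe]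
      exact continuous_expSum _ _
    have hgcont : ∀ w : ℕ, Continuous fun α => g α ((w : ℕ) : ℝ) (π : ℝ) := by
      intro w
      have hfe : (fun α => g α ((w : ℕ) : ℝ) (π : ℝ))
          = fun α => expSum (smoothA ((w : ℕ) : ℝ) (π : ℝ)) (fun n => n ^ 4) α :=
        funext fun α => g_eq α _ _
      rw [hfe]
      exact continuous_expSum _ _
    have hterm : ∀ w : ℕ, Continuous fun α =>
        ‖Ftilde d e P M R π α‖ ^ 2 *
          ‖g α ((w : ℕ) : ℝ) (π : ℝ)‖ ^ 8 := fun w =>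
      ((continuous_norm.comp hFcont).pow 2).mul
        ((continuous_norm.comp (hgcont w)).pow 8)
    have hYint : IntervalIntegrable (fun α => ∑ w ∈ W,
        ‖Ftilde d e P M R π α‖ ^ 2 *
          ‖g α ((w : ℕ) : ℝ) (π : ℝ)‖ ^ 8) MeasureTheory.volume 0 1 :=
      (continuous_finset_sum W fun w _ => hterm w).intervalIntegrable 0 1
    have hmono : ∀ α ∈ Set.Icc (0:ℝ) 1,
        ‖Ftilde d e P M R π α‖ ^ 2 *
          ftilde α (P / ((d : ℝ) * (e : ℝ))) (M / (d : ℝ)) (π : ℝ) ^ 8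
        ≤ ∑ w ∈ W, ‖Ftilde d e P M R π α‖ ^ 2 *
            ‖g α ((w : ℕ) : ℝ) (π : ℝ)‖ ^ 8 := by
      intro α _
      have h8 := ftilde_pow_le (P / ((d : ℝ) * (e : ℝ))) (M / (d : ℝ)) π α
        (by positivity) (by positivity)
      calc ‖Ftilde d e P M R π α‖ ^ 2 *
            ftilde α (P / ((d : ℝ) * (e : ℝ))) (M / (d : ℝ)) (π : ℝ) ^ 8
          ≤ ‖Ftilde d e P M R π α‖ ^ 2 *
            ∑ w ∈ W, ‖g α ((w : ℕ) : ℝ) (π : ℝ)‖ ^ 8 :=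
            mul_le_mul_of_nonneg_left h8 (by positivity)
        _ = ∑ w ∈ W, ‖Ftilde d e P M R π α‖ ^ 2 *
            ‖g α ((w : ℕ) : ℝ) (π : ℝ)‖ ^ 8 := Finset.mul_sum _ _ _
    calc (∫ α in (0:ℝ)..1, ‖Ftilde d e P M R π α‖ ^ 2 *
          ftilde α (P / ((d : ℝ) * (e : ℝ))) (M / (d : ℝ)) (π : ℝ) ^ 8)
        ≤ ∫ α in (0:ℝ)..1, ∑ w ∈ W, ‖Ftilde d e P M R π α‖ ^ 2 *
            ‖g α ((w : ℕ) : ℝ) (π : ℝ)‖ ^ 8 :=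
          intervalIntegral.integral_mono_on (by norm_num) hint hYint hmono
      _ = ∑ w ∈ W, ∫ α in (0:ℝ)..1, ‖Ftilde d e P M R π α‖ ^ 2 *
            ‖g α ((w : ℕ) : ℝ) (π : ℝ)‖ ^ 8 :=
          intervalIntegral.integral_finset_sum
            (fun w _ => (hterm w).intervalIntegrable 0 1)
      _ ≤ ∑ _w ∈ W, I2 := by
          refine Finset.sum_le_sum fun w hw => ?_
          exact step_w d e π P M H Q R hd he hπ hP1 hM1 hπR hH4 hQM w hw
      _ = (W.card : ℝ) * I2 := by
          rw [Finset.sum_const, nsmul_eq_mul]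
      _ ≤ P ^ ε * I2 := mul_le_mul_of_nonneg_right hcardW hI2nn
      _ = 1 * P ^ ε * I2 := by ring
  · -- non-integrable case: the integral is 0 by definition
    rw [intervalIntegral.integral_undef hint]
    have : (0:ℝ) ≤ 1 * P ^ ε * I2 :=
      mul_nonneg (mul_nonneg zero_le_one (Real.rpow_nonneg hP0.le ε)) hI2nn
    exact this
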